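/- Let n be a natural number and let ℓ, L be real numbers with ℓ > 0 and L > (2n+1)·ℓ. Then for every family a₁, …, aₙ of real numbers there exists a real number t with 0 ≤ t and t + ℓ ≤ L such that the closed interval [t, t+ℓ] is disjoint from every closed interval [aᵢ, aᵢ+ℓ], i = 1, …, n. -/

import Mathlib

theorem interval_gap_principle (n : ℕ) (ℓ L : ℝ) (hℓ : ℓ > 0)
    (hL : L > (2 * n + 1) * ℓ) (a : Fin n → ℝ) :
    ∃ t : ℝ, 0 ≤ t ∧ t + ℓ ≤ L ∧
      ∀ i : Fin n, Disjoint (Set.Icc t (t + ℓ)) (Set.Icc (a i) (a i + ℓ)) := by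
  rcases Nat.eq_zero_or_pos n with h0 | hn
  · subst h0
    refine ⟨0, le_refl 0, by push_cast at hL; linarith, fun i => i.elim0⟩
  have hn' : (0:ℝ) < n := by exact_mod_cast hn
  by_contra h
  push_neg at h
  set d := (L - ℓ) / n with hd
  have hdgt : d > 2 * ℓ := by
    rw [hd, gt_iff_lt, lt_div_iff₀ hn']; nlinarith
  have key : ∀ k : Fin (n+1), ∃ i : Fin n, |(k:ℝ) * d - a i| ≤ ℓ := by
    intro k
    have hd0 : 0 < d := by linarith
    have h1 : 0 ≤ (k:ℝ) * d := by positivity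
    have hk : (k:ℝ) ≤ n := by
      exact_mod_cast Nat.lt_succ_iff.mp k.isLt
    have h2 : (k:ℝ) * d + ℓ ≤ L := by
      have : (k:ℝ) * d ≤ n * d := by nlinarith
      have : (n:ℝ) * d = L - ℓ := by rw [hd]; field_simp [hn'.ne']
      nlinarith
    obtain ⟨i, hi⟩ := h _ h1 h2
    rw [Set.not_disjoint_iff] at hi
    obtain ⟨x, ⟨hx1, hx2⟩, hx3, hx4⟩ := hi
    exact ⟨i, abs_le.mpr ⟨by linarith, by linarith⟩⟩
  choose g hg using key
  have hninj : ¬Function.Injective g := by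
    intro hinj
    have := Fintype.card_le_of_injective g hinj
    simp at this
  rw [Function.not_injective_iff] at hninj
  obtain ⟨k, k', hgk, hne⟩ := hninj
  have h1 := abs_le.mp (hg k)
  have h2 := abs_le.mp (hg k')
  rw [hgk] at h1
  rcases hne.lt_or_gt with hlt | hlt
  · have : (k:ℝ) + 1 ≤ k' := by exact_mod_cast hlt
    nlinarith [h1.1, h1.2, h2.1, h2.2]
  · have : (k':ℝ) + 1 ≤ k := by exact_mod_cast hlt
    nlinarith [h1.1, h1.2, h2.1, h2.2]
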